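/- Let $\|\cdot\|$ be a norm on $\mathbb{R}^d$. Then $\mathbb{R}^d$, with the metric induced by $\|\cdot\|$, has finite coarse dimension: there exist $R_0>1$ and $k\in\mathbb{N}$ such that $\mathrm{cdim}_{R_0}(\mathbb{R}^d)\le k$. -/

import Mathlib

/-- `CdimLT X n R0 S` means that the subset `S` of the metric space `X`, with its induced
metric, has coarse dimension `< n` at scales `≥ R0`, i.e. `cdim_{R0} S ≤ n - 1`.
For `n = 0` this means `S = ∅` (coarse dimension `≤ -1`); for `n = k+1` it means that for
every `t ≥ 1`, every `r ≥ t·R0` and every `x ∈ S`, the `t`-boundary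
`∂_t B_r(x) = B_{r+t}(x) \ B_{r-t}(x)` computed inside `S` has coarse dimension `≤ k - 1`
at scales `≥ t·R0`. -/
def CdimLT (X : Type*) [MetricSpace X] : ℕ → ℝ → Set X → Prop
  | 0, _, S => S = ∅
  | (k + 1), R0, S => ∀ t : ℝ, 1 ≤ t → ∀ ρ : ℝ, t * R0 ≤ ρ → ∀ x ∈ S,
      CdimLT X k (t * R0) (S ∩ (Metric.ball x (ρ + t) \ Metric.ball x (ρ - t)))

namespace FCDaux

set_option linter.unusedSectionVars false
set_option linter.unusedVariables false

open Metric Finset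

variable {E : Type*} [NormedAddCommGroup E] [NormedSpace ℝ E] [FiniteDimensional ℝ E]

/-- Negation-friendly "bad chain" predicate mirroring the recursion of `CdimLT`. -/
def Bad (E : Type*) [NormedAddCommGroup E] : ℕ → ℝ → Set E → Prop
  | 0, _, S => S.Nonempty
  | (k + 1), σ, S => ∃ t ρ : ℝ, ∃ x : E, 1 ≤ t ∧ t * σ ≤ ρ ∧ x ∈ S ∧
      Bad E k (t * σ) (S ∩ (Metric.ball x (ρ + t) \ Metric.ball x (ρ - t)))

theorem cdimLT_of_not_bad : ∀ (k : ℕ) (σ : ℝ) (S : Set E), ¬ Bad E k σ S → CdimLT E k σ S := by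
  intro k
  induction k with
  | zero =>
    intro σ S h
    exact Set.not_nonempty_iff_eq_empty.mp h
  | succ k ih =>
    intro σ S h
    intro t ht ρ hρ x hx
    exact ih _ _ (fun hb => h ⟨t, ρ, x, ht, hρ, hx, hb⟩)

/-- The data extracted from a bad chain. -/
structure Chain (E : Type*) [NormedAddCommGroup E] (k : ℕ) (σ : ℝ) (S : Set E) where
  t : ℕ → ℝ
  ρ : ℕ → ℝ
  x : ℕ → E
  y : E
  hy : y ∈ S
  hx : ∀ i, i < k → x i ∈ S
  ht : ∀ i, i < k → 1 ≤ t i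
  hρ : ∀ i, i < k → σ * ∏ j ∈ Finset.range (i + 1), t j ≤ ρ i
  hxx : ∀ j i, j < i → i < k → ρ j - t j ≤ ‖x i - x j‖ ∧ ‖x i - x j‖ < ρ j + t j
  hyx : ∀ j, j < k → ρ j - t j ≤ ‖y - x j‖ ∧ ‖y - x j‖ < ρ j + t j

theorem mem_ann {x0 z : E} {ρ0 t0 : ℝ}
    (h : z ∈ Metric.ball x0 (ρ0 + t0) \ Metric.ball x0 (ρ0 - t0)) :
    ρ0 - t0 ≤ ‖z - x0‖ ∧ ‖z - x0‖ < ρ0 + t0 := by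
  obtain ⟨h1, h2⟩ := h
  rw [Metric.mem_ball, dist_eq_norm] at h1
  rw [Metric.mem_ball, dist_eq_norm] at h2
  push_neg at h2
  exact ⟨h2, h1⟩


theorem chain_of_bad :
    ∀ (k : ℕ) (σ : ℝ) (S : Set E), Bad E k σ S → Nonempty (Chain E k σ S) := by
  intro k
  induction k with
  | zero =>
    rintro σ S ⟨y, hy⟩
    exact ⟨⟨fun _ => 1, fun _ => 1, fun _ => y, y, hy,
      fun i hi => absurd hi (Nat.not_lt_zero i),
      fun i hi => absurd hi (Nat.not_lt_zero i),
      fun i hi => absurd hi (Nat.not_lt_zero i),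
      fun j i hj hi => absurd hi (Nat.not_lt_zero i),
      fun j hj => absurd hj (Nat.not_lt_zero j)⟩⟩
  | succ k ih =>
    rintro σ S ⟨t0, ρ0, x0, ht0, hρ0, hx0, hb⟩
    obtain ⟨C⟩ := ih _ _ hb
    set S' := S ∩ (Metric.ball x0 (ρ0 + t0) \ Metric.ball x0 (ρ0 - t0)) with hS'
    refine ⟨⟨fun i => match i with | 0 => t0 | (n+1) => C.t n,
      fun i => match i with | 0 => ρ0 | (n+1) => C.ρ n,
      fun i => match i with | 0 => x0 | (n+1) => C.x n, C.y, ?_, ?_, ?_, ?_, ?_, ?_⟩⟩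
    · exact C.hy.1
    · rintro (_ | n) hn
      · exact hx0
      · exact (C.hx n (Nat.lt_of_succ_lt_succ hn)).1
    · rintro (_ | n) hn
      · exact ht0
      · exact C.ht n (Nat.lt_of_succ_lt_succ hn)
    · have hprod : ∀ m : ℕ,
          ∏ j ∈ Finset.range (m + 1), (fun i => match i with | 0 => t0 | (n+1) => C.t n : ℕ → ℝ) j
            = (∏ j ∈ Finset.range m, C.t j) * t0 := by
        intro m
        exact Finset.prod_range_succ' (fun i => match i with | 0 => t0 | (n+1) => C.t n) m
      rintro (_ | n) hn
      · simpa [hprod 0, mul_comm] using hρ0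
      · have h1 := C.hρ n (Nat.lt_of_succ_lt_succ hn)
        have h2 : σ * ((∏ j ∈ Finset.range (n + 1), C.t j) * t0)
            = t0 * σ * ∏ j ∈ Finset.range (n + 1), C.t j := by ring
        rw [hprod (n + 1), h2]
        exact h1
    · rintro j (_ | n) hj hn
      · exact absurd hj (Nat.not_lt_zero j)
      · match j, hj with
        | 0, _ =>
          exact mem_ann (C.hx n (Nat.lt_of_succ_lt_succ hn)).2
        | (m + 1), hj =>
          exact C.hxx m n (Nat.lt_of_succ_lt_succ hj) (Nat.lt_of_succ_lt_succ hn)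
    · rintro (_ | m) hm
      · exact mem_ann C.hy.2
      · exact C.hyx m (Nat.lt_of_succ_lt_succ hm)


theorem cover_lemma (R ε : ℝ) (hε : 0 < ε) :
    ∃ s : Finset E, Metric.closedBall (0 : E) R ⊆ ⋃ p ∈ s, Metric.ball p ε := by
  obtain ⟨tset, -, hfin, hcov⟩ := (isCompact_closedBall (0 : E) R).finite_cover_balls hε
  refine ⟨hfin.toFinset, ?_⟩
  simpa [Set.Finite.mem_toFinset] using hcov

theorem one_le_prod_real {f : ℕ → ℝ} {n : ℕ} (hf : ∀ m, m < n → 1 ≤ f m) :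
    1 ≤ ∏ m ∈ Finset.range n, f m := by
  induction n with
  | zero => simp
  | succ n ih =>
    rw [Finset.prod_range_succ]
    have h1 := ih (fun m hm => hf m (by omega))
    have h2 := hf n (by omega)
    nlinarith

theorem single_le_prod_real {f : ℕ → ℝ} :
    ∀ n, ∀ j, (∀ m, m < n → 1 ≤ f m) → j < n → f j ≤ ∏ m ∈ Finset.range n, f m := by
  intro n
  induction n with
  | zero => intro j hf hj; omega
  | succ n ih =>
    intro j hf hj
    rw [Finset.prod_range_succ]
    have h2 := hf n (by omega)
    rcases Nat.lt_or_ge j n with h | h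
    · have h1 := ih j (fun m hm => hf m (by omega)) h
      have h3 := one_le_prod_real (n := n) (fun m hm => hf m (by omega))
      have h4 := hf j (by omega)
      nlinarith
    · have hjn : j = n := by omega
      subst hjn
      have h3 := one_le_prod_real (n := j) (fun m hm => hf m (by omega))
      nlinarith

theorem packing {ι : Type*} [DecidableEq ι] (net : Finset E) {ε R : ℝ}
    (hcov : Metric.closedBall (0 : E) R ⊆ ⋃ p ∈ net, Metric.ball p ε)
    (s : Finset ι) (p : ι → E) (hmem : ∀ i ∈ s, p i ∈ Metric.closedBall (0 : E) R)
    (hsep : ∀ i ∈ s, ∀ j ∈ s, i ≠ j → 2 * ε ≤ dist (p i) (p j)) :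
    s.card ≤ net.card := by
  classical
  have hch : ∀ i ∈ s, ∃ q, q ∈ net ∧ dist (p i) q < ε := by
    intro i hi
    have := hcov (hmem i hi)
    simpa [Set.mem_iUnion, Metric.mem_ball] using this
  choose! f hf1 hf2 using hch
  refine Finset.card_le_card_of_injOn f (fun i hi => hf1 i hi) ?_
  intro i hi j hj hij
  by_contra hne
  have h1 := hsep i hi j hj hne
  have h2 : dist (p i) (p j) < 2 * ε := by
    calc dist (p i) (p j) ≤ dist (p i) (f i) + dist (f j) (p j) := by
          rw [hij]; exact dist_triangle _ _ _
      _ < ε + ε := by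
          rw [dist_comm (f j) (p j)]
          linarith [hf2 i hi, hf2 j hj]
      _ = 2 * ε := by ring
  linarith


theorem drop_pair {a b y : E} {ρj ρl tj tl : ℝ}
    (htj : 100 * tj ≤ ρj) (htl : 100 * tl ≤ ρl) (htjl : 100 * tj ≤ ρl)
    (htj0 : 1 ≤ tj) (htl0 : 1 ≤ tl)
    (hab1 : ρj - tj ≤ ‖b - a‖) (hab2 : ‖b - a‖ ≤ ρj + tj)
    (hya1 : ρj - tj ≤ ‖y - a‖) (hya2 : ‖y - a‖ ≤ ρj + tj)
    (hyb1 : ρl - tl ≤ ‖y - b‖) (hyb2 : ‖y - b‖ ≤ ρl + tl)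
    (hdrop : 12 * ρl ≤ ρj) :
    1 / 2 < ‖(‖y - a‖⁻¹ • (y - a)) - (‖y - b‖⁻¹ • (y - b))‖ := by
  have htjpos : 0 < tj := lt_of_lt_of_le zero_lt_one htj0
  have htlpos : 0 < tl := lt_of_lt_of_le zero_lt_one htl0
  have hρlpos : 0 < ρl := by linarith
  have hρjpos : 0 < ρj := by linarith
  have hrj : 0 < ‖y - a‖ := by nlinarith
  have hrl : 0 < ‖y - b‖ := by nlinarith
  have hspos : 0 < ‖b - a‖ := by nlinarith
  have hw : b - a ≠ 0 := fun h => by rw [h, norm_zero] at hspos; exact lt_irrefl _ hspos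
  obtain ⟨g, hg1, hg2'⟩ := exists_dual_vector ℝ (b - a) (norm_ne_zero_iff.mpr hw)
  have hg2 : g (b - a) = ‖b - a‖ := by simpa using hg2'
  -- g bounds
  have hgb : ∀ z : E, g z ≤ ‖z‖ := by
    intro z
    calc g z ≤ |g z| := le_abs_self _
      _ = ‖g z‖ := (Real.norm_eq_abs _).symm
      _ ≤ ‖g‖ * ‖z‖ := g.le_opNorm z
      _ = ‖z‖ := by rw [hg1, one_mul]
  have hkey : (y - a) - (y - b) = b - a := by abel
  have hgsub : g (y - a) - g (y - b) = ‖b - a‖ := by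
    rw [← map_sub, hkey, hg2]
  -- h(y-b) ≤ 2 tj
  have hvb : g (y - b) ≤ 2 * tj := by
    have := hgb (y - a)
    linarith
  -- h(y-a) ≥ s - rl
  have hva : ‖b - a‖ - ‖y - b‖ ≤ g (y - a) := by
    have := hgb (b - y)
    have hnb : ‖b - y‖ = ‖y - b‖ := norm_sub_rev _ _
    have : g (y - b) ≥ -‖y - b‖ := by
      have h2 := hgb (b - y)
      have : g (b - y) = -g (y - b) := by rw [← map_neg]; congr 1; abel
      linarith [hgb (b - y), hnb ▸ (hgb (b - y))]
    linarith
  by_contra hc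
  push_neg at hc
  -- g applied to the normalized difference
  have hgθ : g (‖y - a‖⁻¹ • (y - a)) - g (‖y - b‖⁻¹ • (y - b)) ≤ 1 / 2 := by
    calc g (‖y - a‖⁻¹ • (y - a)) - g (‖y - b‖⁻¹ • (y - b))
        = g ((‖y - a‖⁻¹ • (y - a)) - (‖y - b‖⁻¹ • (y - b))) := by rw [map_sub]
      _ ≤ ‖(‖y - a‖⁻¹ • (y - a)) - (‖y - b‖⁻¹ • (y - b))‖ := hgb _
      _ ≤ 1 / 2 := hc
  have hsm1 : g (‖y - a‖⁻¹ • (y - a)) = g (y - a) / ‖y - a‖ := by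
    rw [map_smul, smul_eq_mul, inv_mul_eq_div]
  have hsm2 : g (‖y - b‖⁻¹ • (y - b)) = g (y - b) / ‖y - b‖ := by
    rw [map_smul, smul_eq_mul, inv_mul_eq_div]
  rw [hsm1, hsm2] at hgθ
  rw [div_sub_div _ _ (ne_of_gt hrj) (ne_of_gt hrl), div_le_iff₀ (by positivity)] at hgθ
  -- now: g(y-a) * ‖y-b‖ - g(y-b) * ‖y-a‖ ≤ 1/2 * (‖y-a‖ * ‖y-b‖)
  set rj := ‖y - a‖
  set rl := ‖y - b‖
  set s := ‖b - a‖
  have l1 : (s - rl) * rl ≤ g (y - a) * rl := by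
    apply mul_le_mul_of_nonneg_right hva (le_of_lt hrl)
  have l2 : g (y - b) * rj ≤ (2 * tj) * rj := by
    apply mul_le_mul_of_nonneg_right hvb (le_of_lt hrj)
  nlinarith [mul_le_mul_of_nonneg_right hya2 (le_of_lt hrl),
    mul_le_mul_of_nonneg_right hab1 (le_of_lt hrl),
    mul_le_mul_of_nonneg_right hyb2 (le_of_lt hrl),
    mul_le_mul_of_nonneg_right hdrop (le_of_lt hrl),
    mul_le_mul_of_nonneg_left hyb2 (le_of_lt htjpos),
    mul_le_mul_of_nonneg_right htjl (le_of_lt hρjpos),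
    mul_pos hρlpos hρjpos, mul_pos hrl hρjpos]

theorem no_chain (s₁ s₂ : Finset E)
    (h₁ : Metric.closedBall (0 : E) 1 ⊆ ⋃ p ∈ s₁, Metric.ball p (1 / 4))
    (h₂ : Metric.closedBall (0 : E) 4 ⊆ ⋃ p ∈ s₂, Metric.ball p (1 / 146))
    (C : Chain E (2 * s₁.card * s₂.card + 1) 100 Set.univ) : False := by
  classical
  set K := 2 * s₁.card * s₂.card + 1 with hK
  obtain ⟨t, ρ, x, y, hy, hx, ht, hρ, hxx, hyx⟩ := C
  -- basic bounds
  have hbase : ∀ j l, j ≤ l → l < K → 100 * t j ≤ ρ l := by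
    intro j l hjl hl
    have h1 : t j ≤ ∏ m ∈ Finset.range (l + 1), t m := by
      exact single_le_prod_real (l + 1) j
        (fun m hm => ht m (lt_of_le_of_lt (Nat.lt_succ_iff.mp hm) hl))
        (Nat.lt_succ_of_le hjl)
    have h2 := hρ l hl
    have h3 := mul_le_mul_of_nonneg_left h1 (by norm_num : (0:ℝ) ≤ 100)
    linarith
  have htK : ∀ l, l < K → 1 ≤ t l := ht
  have hρ100 : ∀ l, l < K → 100 ≤ ρ l := by
    intro l hl
    have h1 := hbase l l le_rfl hl
    have h2 := ht l hl
    linarith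
  have hρpos : ∀ l, l < K → 0 < ρ l := fun l hl => by linarith [hρ100 l hl]
  have htρ : ∀ l, l < K → 100 * t l ≤ ρ l := fun l hl => hbase l l le_rfl hl
  have hXX : ∀ j l, j < l → l < K → ρ j - t j ≤ ‖x l - x j‖ ∧ ‖x l - x j‖ ≤ ρ j + t j :=
    fun j l h1 h2 => ⟨(hxx j l h1 h2).1, le_of_lt (hxx j l h1 h2).2⟩
  have hYX : ∀ j, j < K → ρ j - t j ≤ ‖y - x j‖ ∧ ‖y - x j‖ ≤ ρ j + t j :=
    fun j h => ⟨(hyx j h).1, le_of_lt (hyx j h).2⟩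
  have hcomp : ∀ j l, j < l → l < K → ρ l ≤ 3 * ρ j := by
    intro j l hjl hl
    have hjK : j < K := lt_trans hjl hl
    have h1 := (hYX l hl).1
    have h2 := (hYX j hjK).2
    have h3 := (hXX j l hjl hl).2
    have htri : ‖y - x l‖ ≤ ‖y - x j‖ + ‖x l - x j‖ := by
      have he : y - x l = (y - x j) - (x l - x j) := by abel
      rw [he]; exact norm_sub_le _ _
    have h4 := htρ l hl
    have h5 := htρ j hjK
    have h6 := ht l hl
    have h7 := ht j hjK
    linarith
  -- running minimum of the radii
  set μ : ℕ → ℝ := fun i => (Finset.range (i + 1)).inf' Finset.nonempty_range_add_one ρ with hμdef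
  have hμle : ∀ j i, j ≤ i → μ i ≤ ρ j := by
    intro j i hji
    exact Finset.inf'_le ρ (Finset.mem_range.mpr (Nat.lt_succ_of_le hji))
  have hμeq : ∀ i, ∃ j, j ≤ i ∧ μ i = ρ j := by
    intro i
    obtain ⟨j, hj, he⟩ := Finset.exists_mem_eq_inf' (Finset.nonempty_range_add_one) ρ
    exact ⟨j, Nat.lt_succ_iff.mp (Finset.mem_range.mp hj), he⟩
  have hμ100 : ∀ i, i < K → 100 ≤ μ i := by
    intro i hi
    obtain ⟨j, hji, he⟩ := hμeq i
    rw [he]; exact hρ100 j (lt_of_le_of_lt hji hi)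
  have hμpos : ∀ i, i < K → 0 < μ i := fun i hi => by linarith [hμ100 i hi]
  have hμanti : ∀ i i', i ≤ i' → μ i' ≤ μ i := by
    intro i i' h
    obtain ⟨j, hji, he⟩ := hμeq i
    rw [he]; exact hμle j i' (le_trans hji h)
  have hρ3μ : ∀ i, i < K → ρ i ≤ 3 * μ i := by
    intro i hi
    obtain ⟨j, hji, he⟩ := hμeq i
    rcases Nat.lt_or_ge j i with hlt | hge
    · rw [he]; exact hcomp j i hlt hi
    · have : j = i := le_antisymm hji hge
      rw [he, this]; linarith [hρpos i hi]
  -- classes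
  set c : ℕ → ℤ := fun i => ⌊Real.logb 72 (μ i)⌋ with hcdef
  have h72 : (1:ℝ) < 72 := by norm_num
  have hcanti : ∀ i i', i ≤ i' → i' < K → c i' ≤ c i := by
    intro i i' h hi'
    exact Int.floor_le_floor (Real.logb_le_logb_of_le h72 (hμpos i' hi') (hμanti i i' h))
  have hsame : ∀ i i', i ≤ i' → i < K → i' < K → c i = c i' → μ i < 72 * μ i' := by
    intro i i' h hiK hi'K hc
    have h1 : Real.logb 72 (μ i) < c i + 1 := Int.lt_floor_add_one _
    have h2 : (c i' : ℝ) ≤ Real.logb 72 (μ i') := Int.floor_le _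
    have h3 : Real.logb 72 (72 * μ i') = 1 + Real.logb 72 (μ i') := by
      rw [Real.logb_mul (by norm_num) (ne_of_gt (hμpos i' hi'K)), Real.logb_self_eq_one h72]
    have h4 : Real.logb 72 (μ i) < Real.logb 72 (72 * μ i') := by
      rw [h3, hc] at *
      push_cast at h1 h2 ⊢
      linarith
    exact (Real.logb_lt_logb_iff h72 (hμpos i hiK) (mul_pos (by norm_num) (hμpos i' hi'K))).mp h4
  have hgap : ∀ i i', i ≤ i' → i < K → i' < K → c i' + 2 ≤ c i → 72 * μ i' < μ i := by
    intro i i' h hiK hi'K hc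
    have h1 : Real.logb 72 (μ i') < c i' + 1 := Int.lt_floor_add_one _
    have h2 : (c i : ℝ) ≤ Real.logb 72 (μ i) := Int.floor_le _
    have h3 : Real.logb 72 (72 * μ i') = 1 + Real.logb 72 (μ i') := by
      rw [Real.logb_mul (by norm_num) (ne_of_gt (hμpos i' hi'K)), Real.logb_self_eq_one h72]
    have hc' : (c i' : ℝ) + 2 ≤ (c i : ℝ) := by exact_mod_cast hc
    have h4 : Real.logb 72 (72 * μ i') < Real.logb 72 (μ i) := by
      rw [h3]; linarith
    exact (Real.logb_lt_logb_iff h72 (mul_pos (by norm_num) (hμpos i' hi'K)) (hμpos i hiK)).mp h4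
  -- direction vectors
  have hyxpos : ∀ i, i < K → 0 < ‖y - x i‖ := by
    intro i hi
    have h1 := (hYX i hi).1
    have h2 := htρ i hi
    have h3 := hρ100 i hi
    linarith
  set θ : ℕ → E := fun i => ‖y - x i‖⁻¹ • (y - x i) with hθdef
  have hθnorm : ∀ i, i < K → ‖θ i‖ = 1 := by
    intro i hi
    rw [hθdef]
    simp only [norm_smul, norm_inv, norm_norm]
    exact inv_mul_cancel₀ (ne_of_gt (hyxpos i hi))
  have hdrop12 : ∀ i i', i < i' → i' < K → 12 * ρ i' ≤ ρ i → 1 / 2 < ‖θ i - θ i'‖ := by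
    intro i i' h hi' hd
    have hiK : i < K := lt_trans h hi'
    exact drop_pair (htρ i hiK) (htρ i' hi') (hbase i i' (le_of_lt h) hi')
      (ht i hiK) (ht i' hi') (hXX i i' h hi').1 (hXX i i' h hi').2
      (hYX i hiK).1 (hYX i hiK).2 (hYX i' hi').1 (hYX i' hi').2 hd
  -- counting part 1: fibers of c are small
  have hcard1 : K ≤ s₂.card * ((Finset.range K).image c).card := by
    have hfib : ∀ v ∈ (Finset.range K).image c,
        ((Finset.range K).filter (fun i => c i = v)).card ≤ s₂.card := by
      intro v hv
      set F := (Finset.range K).filter (fun i => c i = v) with hF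
      have hFne : F.Nonempty := by
        obtain ⟨i, hi, he⟩ := Finset.mem_image.mp hv
        exact ⟨i, Finset.mem_filter.mpr ⟨hi, he⟩⟩
      set a := F.min' hFne with ha
      have haF : a ∈ F := F.min'_mem hFne
      have haK : a < K := Finset.mem_range.mp (Finset.mem_filter.mp haF).1
      have hac : c a = v := (Finset.mem_filter.mp haF).2
      have hmin : ∀ i ∈ F, a ≤ i := fun i hi => F.min'_le i hi
      have hFK : ∀ i ∈ F, i < K := fun i hi => Finset.mem_range.mp (Finset.mem_filter.mp hi).1
      have hFc : ∀ i ∈ F, c i = v := fun i hi => (Finset.mem_filter.mp hi).2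
      have hμF : ∀ i ∈ F, μ a < 72 * μ i := by
        intro i hi
        exact hsame a i (hmin i hi) haK (hFK i hi) (by rw [hac, hFc i hi])
      refine packing s₂ h₂ F (fun i => (μ a)⁻¹ • (x i - x a)) ?_ ?_
      · intro i hiF
        rw [Metric.mem_closedBall, dist_zero_right]
        rcases Nat.lt_or_ge a i with hlt | hge
        · have h1 := (hXX a i hlt (hFK i hiF)).2
          have h2 := hρ3μ a haK
          have h3 := htρ a haK
          have h4 := hμpos a haK
          have hnle : ‖x i - x a‖ ≤ 4 * μ a := by linarith
          rw [norm_smul, norm_inv, Real.norm_eq_abs, abs_of_pos h4]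
          rw [inv_mul_le_iff₀ h4]
          linarith
        · have : i = a := le_antisymm (by omega) (hmin i hiF)
          rw [this]
          simp [hμpos a haK]
      · have sep' : ∀ i ∈ F, ∀ i' ∈ F, i < i' → 1 / 73 ≤ dist
            ((μ a)⁻¹ • (x i - x a)) ((μ a)⁻¹ • (x i' - x a)) := by
          intro i hiF i' hi'F hlt
          have hiK := hFK i hiF
          have hi'K := hFK i' hi'F
          have h1 := (hXX i i' hlt hi'K).1
          have h2 := hμF i hiF
          have h3 := htρ i hiK
          have h4 := hμle i i le_rfl
          have h5 := hμpos a haK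
          have hd : μ a / 73 ≤ ‖x i' - x i‖ := by linarith
          have he : ((μ a)⁻¹ • (x i - x a)) - ((μ a)⁻¹ • (x i' - x a))
              = (μ a)⁻¹ • (x i - x i') := by
            rw [← smul_sub]; congr 1; abel
          rw [dist_eq_norm, he, norm_smul, norm_inv, Real.norm_eq_abs, abs_of_pos h5,
            norm_sub_rev]
          have hmul := mul_le_mul_of_nonneg_left hd (le_of_lt (inv_pos.mpr h5))
          have heq : (μ a)⁻¹ * (μ a / 73) = 1 / 73 := by field_simp
          linarith [heq ▸ hmul]
        intro i hi i' hi' hne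
        have h146 : 2 * (1 / 146 : ℝ) = 1 / 73 := by norm_num
        rcases lt_or_gt_of_ne hne with h | h
        · rw [h146]; exact sep' i hi i' hi' h
        · rw [h146, dist_comm]; exact sep' i' hi' i hi h
    have := Finset.card_le_mul_card_image (f := c) (Finset.range K) s₂.card hfib
    simpa [Finset.card_range] using this
  -- counting part 2: the image of c is small
  set V := (Finset.range K).image c with hV
  have hidxset : ∀ v ∈ V, ((Finset.range K).filter (fun i => c i = v)).Nonempty := by
    intro v hv
    obtain ⟨i, hi, he⟩ := Finset.mem_image.mp hv
    exact ⟨i, Finset.mem_filter.mpr ⟨hi, he⟩⟩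
  set idx : ℤ → ℕ := fun v =>
    if h : ((Finset.range K).filter (fun i => c i = v)).Nonempty then
      ((Finset.range K).filter (fun i => c i = v)).min' h else 0 with hidxdef
  have hidxmem : ∀ v ∈ V, idx v ∈ (Finset.range K).filter (fun i => c i = v) := by
    intro v hv
    rw [hidxdef]
    simp only [dif_pos (hidxset v hv)]
    exact Finset.min'_mem _ _
  have hidxK : ∀ v ∈ V, idx v < K := by
    intro v hv
    exact Finset.mem_range.mp (Finset.mem_filter.mp (hidxmem v hv)).1
  have hidxc : ∀ v ∈ V, c (idx v) = v := by
    intro v hv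
    exact (Finset.mem_filter.mp (hidxmem v hv)).2
  have hord : ∀ v v', v ∈ V → v' ∈ V → v' < v → idx v < idx v' := by
    intro v v' hv hv' hlt
    by_contra hno
    push_neg at hno
    have h1 := hcanti (idx v') (idx v) hno (hidxK v hv)
    rw [hidxc v hv, hidxc v' hv'] at h1
    omega
  have hsepθ : ∀ v v', v ∈ V → v' ∈ V → v' + 2 ≤ v → 1 / 2 < dist (θ (idx v)) (θ (idx v')) := by
    intro v v' hv hv' hle
    have hlt : idx v < idx v' := hord v v' hv hv' (by omega)
    have hgapμ : 72 * μ (idx v') < μ (idx v) := by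
      refine hgap (idx v) (idx v') (le_of_lt hlt) (hidxK v hv) (hidxK v' hv') ?_
      rw [hidxc v hv, hidxc v' hv']; omega
    have hdropρ : 12 * ρ (idx v') ≤ ρ (idx v) := by
      have h1 := hρ3μ (idx v') (hidxK v' hv')
      have h2 := hμle (idx v) (idx v) le_rfl
      have h3 := hμpos (idx v') (hidxK v' hv')
      linarith
    rw [dist_eq_norm]
    exact hdrop12 _ _ hlt (hidxK v' hv') hdropρ
  have hpar : ∀ b : ℤ, (V.filter (fun v => v % 2 = b)).card ≤ s₁.card := by
    intro b
    refine packing s₁ h₁ (V.filter (fun v => v % 2 = b)) (fun v => θ (idx v)) ?_ ?_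
    · intro v hv
      have hvV : v ∈ V := (Finset.mem_filter.mp hv).1
      rw [Metric.mem_closedBall, dist_zero_right, hθnorm _ (hidxK v hvV)]
    · intro v hv v' hv' hne
      have hvV : v ∈ V := (Finset.mem_filter.mp hv).1
      have hv'V : v' ∈ V := (Finset.mem_filter.mp hv').1
      have hb1 : v % 2 = b := (Finset.mem_filter.mp hv).2
      have hb2 : v' % 2 = b := (Finset.mem_filter.mp hv').2
      have h14 : 2 * (1 / 4 : ℝ) = 1 / 2 := by norm_num
      rcases lt_or_gt_of_ne hne with h | h
      · have : v + 2 ≤ v' := by omega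
        rw [h14, dist_comm]
        exact le_of_lt (hsepθ v' v hv'V hvV this)
      · have : v' + 2 ≤ v := by omega
        rw [h14]
        exact le_of_lt (hsepθ v v' hvV hv'V this)
  have hVcard : V.card ≤ 2 * s₁.card := by
    have hsplit := Finset.card_filter_add_card_filter_not
      (s := V) (p := fun v => v % 2 = 0)
    have hodd : (V.filter (fun v => ¬ v % 2 = 0)) = (V.filter (fun v => v % 2 = 1)) := by
      apply Finset.filter_congr
      intro v hv
      constructor
      · intro h; omega
      · intro h; omega
    have h0 := hpar 0
    have h1 := hpar 1
    rw [hodd] at hsplit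
    omega
  -- conclusion
  have hfinal : K ≤ s₂.card * (2 * s₁.card) :=
    le_trans hcard1 (Nat.mul_le_mul_left _ hVcard)
  have : s₂.card * (2 * s₁.card) = 2 * s₁.card * s₂.card := by ring
  omega


theorem finite_coarse_dimension_aux :
    ∃ R0 : ℝ, 1 < R0 ∧ ∃ k : ℕ, CdimLT E (k + 1) R0 Set.univ := by
  obtain ⟨s₁, h₁⟩ := cover_lemma (E := E) 1 (1 / 4) (by norm_num)
  obtain ⟨s₂, h₂⟩ := cover_lemma (E := E) 4 (1 / 146) (by norm_num)
  refine ⟨100, by norm_num, 2 * s₁.card * s₂.card, ?_⟩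
  apply cdimLT_of_not_bad
  intro hbad
  obtain ⟨C⟩ := chain_of_bad _ _ _ hbad
  exact no_chain s₁ s₂ h₁ h₂ C

end FCDaux

/-- `ℝ^d` with the metric induced by an arbitrary norm (formalized as a finite-dimensional
real normed space) has finite coarse dimension: there are `R0 > 1` and `k ∈ ℕ` with
`cdim_{R0}(ℝ^d) ≤ k`. -/
theorem finite_coarse_dimension {E : Type*} [NormedAddCommGroup E]
    [NormedSpace ℝ E] [FiniteDimensional ℝ E] :
    ∃ R0 : ℝ, 1 < R0 ∧ ∃ k : ℕ, CdimLT E (k + 1) R0 Set.univ :=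
  FCDaux.finite_coarse_dimension_aux
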